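/- arXiv:1009.0068 — 2 statements merged into one kernel-verified Lean document; each statement's English description precedes it below -/
import Mathlib

section
/- For an exponentially distributed random variable X with rate λ > 0 and fixed r with 0 < r < 1, lim_{ρ→∞} log P(log(1 + ρX) < r log ρ) / log ρ = r - 1. -/
open Filter Real MeasureTheory

lemma auxA {c r : ℝ} (hc : 0 < c) (hr : 0 < r) (hr1 : r < 1) :
    Tendsto (fun ρ : ℝ => Real.log (1 - Real.exp (-(c * ((ρ ^ r - 1) / ρ)))) / Real.log ρ)
      atTop (nhds (r - 1)) := by
  -- u ρ := c * ((ρ^r - 1)/ρ) tends to 0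
  have hu0 : Tendsto (fun ρ : ℝ => c * ((ρ ^ r - 1) / ρ)) atTop (nhds 0) := by
    have h3 : Tendsto (fun ρ : ℝ => ρ ^ (r - 1)) atTop (nhds 0) := by
      have h2 := tendsto_rpow_neg_atTop (show (0:ℝ) < 1 - r by linarith)
      refine h2.congr' ?_
      filter_upwards with ρ
      rw [neg_sub]
    have h1 : Tendsto (fun ρ : ℝ => ρ ^ (r - 1) - ρ⁻¹) atTop (nhds 0) := by
      simpa using h3.sub tendsto_inv_atTop_zero
    have heq : ∀ᶠ ρ : ℝ in atTop, ρ ^ (r - 1) - ρ⁻¹ = (ρ ^ r - 1) / ρ := by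
      filter_upwards [eventually_gt_atTop (0:ℝ)] with ρ hρ
      rw [sub_div, Real.rpow_sub hρ, Real.rpow_one, one_div]
    have := h1.congr' heq
    simpa using this.const_mul c
  have hupos : ∀ᶠ ρ : ℝ in atTop, 0 < c * ((ρ ^ r - 1) / ρ) := by
    filter_upwards [eventually_gt_atTop (1:ℝ)] with ρ hρ
    have hρ0 : (0:ℝ) < ρ := lt_trans one_pos hρ
    have : 1 < ρ ^ r := Real.one_lt_rpow_iff_of_pos hρ0 |>.mpr (Or.inl ⟨hρ, hr⟩)
    exact mul_pos hc (div_pos (by linarith) hρ0)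
  have hslope : Tendsto (fun u : ℝ => (1 - Real.exp (-u)) / u) (nhdsWithin 0 {(0:ℝ)}ᶜ) (nhds 1) := by
    have hd : HasDerivAt (fun x : ℝ => 1 - Real.exp (-x)) 1 0 := by
      have h := (Real.hasDerivAt_exp (-0)).comp 0 (hasDerivAt_neg 0)
      simpa using h.const_sub 1
    have h := hasDerivAt_iff_tendsto_slope.mp hd
    refine h.congr (fun u => ?_)
    simp [slope_def_field, Real.exp_zero]
  have huin : Tendsto (fun ρ : ℝ => c * ((ρ ^ r - 1) / ρ)) atTop (nhdsWithin 0 {(0:ℝ)}ᶜ) := by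
    rw [tendsto_nhdsWithin_iff]
    exact ⟨hu0, hupos.mono fun ρ h => ne_of_gt h⟩
  have hratio : Tendsto (fun ρ : ℝ =>
      (1 - Real.exp (-(c * ((ρ ^ r - 1) / ρ)))) / (c * ((ρ ^ r - 1) / ρ))) atTop (nhds 1) :=
    hslope.comp huin
  have hlograt : Tendsto (fun ρ : ℝ =>
      Real.log ((1 - Real.exp (-(c * ((ρ ^ r - 1) / ρ)))) / (c * ((ρ ^ r - 1) / ρ)))) atTop (nhds 0) := by
    have := (Real.continuousAt_log one_ne_zero).tendsto.comp hratio
    simpa [Function.comp_def] using this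
  have hloginv : Tendsto (fun ρ : ℝ => (Real.log ρ)⁻¹) atTop (nhds 0) :=
    Real.tendsto_log_atTop.inv_tendsto_atTop
  have hA : Tendsto (fun ρ : ℝ => Real.log (1 - ρ ^ (-r))) atTop (nhds 0) := by
    have h1 : Tendsto (fun ρ : ℝ => 1 - ρ ^ (-r)) atTop (nhds 1) := by
      simpa using (tendsto_const_nhds (x := (1:ℝ))).sub (tendsto_rpow_neg_atTop hr)
    have := (Real.continuousAt_log one_ne_zero).tendsto.comp h1
    simpa [Function.comp_def] using this
  have hfinal : Tendsto (fun ρ : ℝ => (r - 1) +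
      (Real.log c + Real.log (1 - ρ ^ (-r)) +
        Real.log ((1 - Real.exp (-(c * ((ρ ^ r - 1) / ρ)))) / (c * ((ρ ^ r - 1) / ρ)))) *
        (Real.log ρ)⁻¹) atTop (nhds (r - 1)) := by
    have hnum : Tendsto (fun ρ : ℝ => Real.log c + Real.log (1 - ρ ^ (-r)) +
        Real.log ((1 - Real.exp (-(c * ((ρ ^ r - 1) / ρ)))) / (c * ((ρ ^ r - 1) / ρ))))
        atTop (nhds (Real.log c)) := by
      simpa using ((tendsto_const_nhds (x := Real.log c)).add hA).add hlograt
    have := tendsto_const_nhds (x := r - 1) |>.add (hnum.mul hloginv)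
    simpa using this
  refine hfinal.congr' ?_
  filter_upwards [eventually_gt_atTop (1:ℝ)] with ρ hρ
  have hρ0 : (0:ℝ) < ρ := lt_trans one_pos hρ
  have hρr : 1 < ρ ^ r := Real.one_lt_rpow_iff_of_pos hρ0 |>.mpr (Or.inl ⟨hρ, hr⟩)
  have hu : 0 < c * ((ρ ^ r - 1) / ρ) := mul_pos hc (div_pos (by linarith) hρ0)
  have hlogρ : 0 < Real.log ρ := Real.log_pos hρ
  have hexp : Real.exp (-(c * ((ρ ^ r - 1) / ρ))) < 1 := by
    rw [Real.exp_lt_one_iff]; linarith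
  have h1e : 0 < 1 - Real.exp (-(c * ((ρ ^ r - 1) / ρ))) := by linarith
  have hinv1 : ρ ^ (-r) < 1 := Real.rpow_lt_one_of_one_lt_of_neg hρ (by linarith)
  have hinvpos : 0 < ρ ^ (-r) := Real.rpow_pos_of_pos hρ0 _
  have hprod : ρ ^ r * ρ ^ (-r) = 1 := by
    rw [← Real.rpow_add hρ0]; simp
  have hfact : ρ ^ r - 1 = ρ ^ r * (1 - ρ ^ (-r)) := by
    rw [mul_sub, hprod, mul_one]
  have hlog1 : Real.log (1 - Real.exp (-(c * ((ρ ^ r - 1) / ρ)))) =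
      Real.log (c * ((ρ ^ r - 1) / ρ)) +
      Real.log ((1 - Real.exp (-(c * ((ρ ^ r - 1) / ρ)))) / (c * ((ρ ^ r - 1) / ρ))) := by
    rw [← Real.log_mul (ne_of_gt hu) (ne_of_gt (div_pos h1e hu)),
      mul_div_cancel₀ _ (ne_of_gt hu)]
  have hlog2 : Real.log (c * ((ρ ^ r - 1) / ρ)) =
      Real.log c + (r * Real.log ρ + Real.log (1 - ρ ^ (-r)) - Real.log ρ) := by
    rw [Real.log_mul (ne_of_gt hc) (ne_of_gt (div_pos (by linarith) hρ0)),
      Real.log_div (by linarith) (ne_of_gt hρ0), hfact,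
      Real.log_mul (ne_of_gt (Real.rpow_pos_of_pos hρ0 r)) (by linarith),
      Real.log_rpow hρ0]
  rw [hlog1, hlog2]
  field_simp
  ring

/-- For `X ~ Exp(λ)` and `0 < r < 1`,
`lim_{ρ→∞} log P(log(1 + ρX) < r log ρ) / log ρ = r - 1`. -/
theorem stmt_1 {Ω : Type*} [MeasurableSpace Ω] (μ : Measure Ω) [IsProbabilityMeasure μ]
    (X : Ω → ℝ) (lam r : ℝ) (hlam : 0 < lam) (hr : 0 < r) (hr1 : r < 1)
    (hX : ∀ x : ℝ, 0 ≤ x → (μ {ω | X ω ≤ x}).toReal = 1 - Real.exp (-lam * x)) :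
    Tendsto (fun ρ : ℝ =>
        Real.log (μ {ω | Real.log (1 + ρ * X ω) < r * Real.log ρ}).toReal / Real.log ρ)
      atTop (nhds (r - 1)) := by
  have hN : μ {ω | X ω ≤ 0} = 0 := by
    have h0 := hX 0 le_rfl
    simp at h0
    exact ((ENNReal.toReal_eq_zero_iff _).mp h0).resolve_right (measure_ne_top μ _)
  have hlow := auxA (c := lam / 2) (by linarith) hr hr1
  have hup := auxA (c := lam) hlam hr hr1
  refine tendsto_of_tendsto_of_tendsto_of_le_of_le' hlow hup ?_ ?_
  · -- lower bound eventually
    filter_upwards [eventually_gt_atTop (1:ℝ)] with ρ hρ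
    have hρ0 : (0:ℝ) < ρ := lt_trans one_pos hρ
    have hρr : 1 < ρ ^ r := Real.one_lt_rpow_iff_of_pos hρ0 |>.mpr (Or.inl ⟨hρ, hr⟩)
    have hxpos : 0 < (ρ ^ r - 1) / ρ := div_pos (by linarith) hρ0
    have hlogρ : 0 < Real.log ρ := Real.log_pos hρ
    set t : ℝ := (ρ ^ r - 1) / ρ / 2 with ht
    have htpos : 0 < t := by positivity
    have hincl : {ω | X ω ≤ t} ⊆
        {ω | Real.log (1 + ρ * X ω) < r * Real.log ρ} ∪ {ω | X ω ≤ 0} := by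
      intro ω hω
      rcases le_or_gt (X ω) 0 with h | h
      · exact Or.inr h
      · left
        have hlt : X ω < (ρ ^ r - 1) / ρ := lt_of_le_of_lt hω (by linarith)
        have h2 : X ω * ρ < ρ ^ r - 1 := (lt_div_iff₀ hρ0).mp hlt
        have h3 : 1 + ρ * X ω < ρ ^ r := by nlinarith
        have h1 : (1:ℝ) < 1 + ρ * X ω := by nlinarith
        calc Real.log (1 + ρ * X ω) < Real.log (ρ ^ r) := Real.log_lt_log (by linarith) h3
          _ = r * Real.log ρ := Real.log_rpow hρ0 r
    have hmeas : μ {ω | X ω ≤ t} ≤ μ {ω | Real.log (1 + ρ * X ω) < r * Real.log ρ} := by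
      calc μ {ω | X ω ≤ t} ≤ μ ({ω | Real.log (1 + ρ * X ω) < r * Real.log ρ} ∪ {ω | X ω ≤ 0}) :=
            measure_mono hincl
        _ ≤ μ {ω | Real.log (1 + ρ * X ω) < r * Real.log ρ} + μ {ω | X ω ≤ 0} :=
            measure_union_le _ _
        _ = _ := by rw [hN, add_zero]
    have htr : (1 : ℝ) - Real.exp (-(lam / 2 * ((ρ ^ r - 1) / ρ))) ≤
        (μ {ω | Real.log (1 + ρ * X ω) < r * Real.log ρ}).toReal := by
      have := hX t (le_of_lt htpos)
      have heq : -lam * t = -(lam / 2 * ((ρ ^ r - 1) / ρ)) := by rw [ht]; ring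
      rw [heq] at this
      rw [← this]
      exact ENNReal.toReal_mono (measure_ne_top μ _) hmeas
    have hpos : 0 < 1 - Real.exp (-(lam / 2 * ((ρ ^ r - 1) / ρ))) := by
      have : Real.exp (-(lam / 2 * ((ρ ^ r - 1) / ρ))) < 1 := by
        rw [Real.exp_lt_one_iff]
        nlinarith
      linarith
    gcongr

  · -- upper bound eventually
    filter_upwards [eventually_gt_atTop (1:ℝ)] with ρ hρ
    have hρ0 : (0:ℝ) < ρ := lt_trans one_pos hρ
    have hρr : 1 < ρ ^ r := Real.one_lt_rpow_iff_of_pos hρ0 |>.mpr (Or.inl ⟨hρ, hr⟩)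
    have hxpos : 0 < (ρ ^ r - 1) / ρ := div_pos (by linarith) hρ0
    have hlogρ : 0 < Real.log ρ := Real.log_pos hρ
    have hincl : {ω | Real.log (1 + ρ * X ω) < r * Real.log ρ} ⊆
        {ω | X ω ≤ (ρ ^ r - 1) / ρ} ∪ {ω | X ω ≤ 0} := by
      intro ω hω
      rcases le_or_gt (X ω) 0 with h | h
      · exact Or.inr h
      · left
        have h1 : (1:ℝ) < 1 + ρ * X ω := by nlinarith
        have h2 : Real.log (1 + ρ * X ω) < Real.log (ρ ^ r) := by
          rwa [Real.log_rpow hρ0]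
        have h3 : 1 + ρ * X ω < ρ ^ r :=
          (Real.log_lt_log_iff (by linarith) (by linarith)).mp h2
        have : X ω * ρ ≤ ρ ^ r - 1 := by nlinarith
        exact (le_div_iff₀ hρ0).mpr this
    have hmeas : μ {ω | Real.log (1 + ρ * X ω) < r * Real.log ρ} ≤
        μ {ω | X ω ≤ (ρ ^ r - 1) / ρ} := by
      calc μ {ω | Real.log (1 + ρ * X ω) < r * Real.log ρ}
          ≤ μ ({ω | X ω ≤ (ρ ^ r - 1) / ρ} ∪ {ω | X ω ≤ 0}) := measure_mono hincl
        _ ≤ μ {ω | X ω ≤ (ρ ^ r - 1) / ρ} + μ {ω | X ω ≤ 0} := measure_union_le _ _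
        _ = _ := by rw [hN, add_zero]
    have htr : (μ {ω | Real.log (1 + ρ * X ω) < r * Real.log ρ}).toReal ≤
        1 - Real.exp (-(lam * ((ρ ^ r - 1) / ρ))) := by
      have h := hX ((ρ ^ r - 1) / ρ) (le_of_lt hxpos)
      have heq : -lam * ((ρ ^ r - 1) / ρ) = -(lam * ((ρ ^ r - 1) / ρ)) := by ring
      rw [heq] at h
      rw [← h]
      exact ENNReal.toReal_mono (measure_ne_top μ _) hmeas
    have hEpos : 0 < (μ {ω | Real.log (1 + ρ * X ω) < r * Real.log ρ}).toReal := by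
      have hincl2 : {ω | X ω ≤ (ρ ^ r - 1) / ρ / 2} ⊆
          {ω | Real.log (1 + ρ * X ω) < r * Real.log ρ} ∪ {ω | X ω ≤ 0} := by
        intro ω hω
        rcases le_or_gt (X ω) 0 with h | h
        · exact Or.inr h
        · left
          have hlt : X ω < (ρ ^ r - 1) / ρ := lt_of_le_of_lt hω (by linarith)
          have h2 : X ω * ρ < ρ ^ r - 1 := (lt_div_iff₀ hρ0).mp hlt
          have h3 : 1 + ρ * X ω < ρ ^ r := by nlinarith
          calc Real.log (1 + ρ * X ω) < Real.log (ρ ^ r) :=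
                Real.log_lt_log (by nlinarith) h3
            _ = r * Real.log ρ := Real.log_rpow hρ0 r
      have hm : μ {ω | X ω ≤ (ρ ^ r - 1) / ρ / 2} ≤
          μ {ω | Real.log (1 + ρ * X ω) < r * Real.log ρ} := by
        calc μ {ω | X ω ≤ (ρ ^ r - 1) / ρ / 2}
            ≤ μ ({ω | Real.log (1 + ρ * X ω) < r * Real.log ρ} ∪ {ω | X ω ≤ 0}) :=
              measure_mono hincl2
          _ ≤ _ + μ {ω | X ω ≤ 0} := measure_union_le _ _
          _ = _ := by rw [hN, add_zero]
      have h := hX ((ρ ^ r - 1) / ρ / 2) (by positivity)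
      have h2 : 0 < 1 - Real.exp (-lam * ((ρ ^ r - 1) / ρ / 2)) := by
        have : Real.exp (-lam * ((ρ ^ r - 1) / ρ / 2)) < 1 := by
          rw [Real.exp_lt_one_iff]; nlinarith
        linarith
      calc (0:ℝ) < 1 - Real.exp (-lam * ((ρ ^ r - 1) / ρ / 2)) := h2
        _ = (μ {ω | X ω ≤ (ρ ^ r - 1) / ρ / 2}).toReal := h.symm
        _ ≤ _ := ENNReal.toReal_mono (measure_ne_top μ _) hm
    gcongr
end

section
/- Let X₁, …, X_N be independent exponentially distributed random variables with rates λ₁, …, λ_N > 0, fix 0 < r < 1/2, set th(ρ) = (2^{2r log₂ ρ} - 1)/ρ (equivalently threshold (ρ^{2r}-1)/ρ), and for a fixed subset Γ ⊆ {1,…,N} of size t let p_Γ(ρ) = ∏_{i∈Γ} exp(-λ_i th(ρ)) · ∏_{i∉Γ} (1 - exp(-λ_i th(ρ))). Then lim_{ρ→∞} log p_Γ(ρ) / log ρ = (2r-1)(N-t). -/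
open Filter Real


private lemma th_pos {r : ℝ} (hr : 0 < r) {ρ : ℝ} (hρ : 1 < ρ) :
    0 < (ρ ^ (2*r) - 1) / ρ := by
  apply div_pos _ (by linarith)
  have : (1:ℝ) < ρ ^ (2*r) :=
    (Real.one_lt_rpow_iff_of_pos (by linarith)).mpr (Or.inl ⟨hρ, by linarith⟩)
  linarith

private lemma th_tendsto {r : ℝ} (hr : 0 < r) (hr2 : r < 1/2) :
    Tendsto (fun ρ : ℝ => (ρ ^ (2*r) - 1) / ρ) atTop (nhds 0) := by
  have ha : Tendsto (fun ρ : ℝ => ρ ^ (2*r - 1)) atTop (nhds 0) := by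
    have := tendsto_rpow_neg_atTop (y := 1 - 2*r) (by linarith)
    simpa [neg_sub] using this
  have h1 : Tendsto (fun ρ : ℝ => ρ ^ (2*r - 1) - ρ⁻¹) atTop (nhds 0) := by
    simpa using ha.sub tendsto_inv_atTop_zero
  refine h1.congr' ?_
  filter_upwards [eventually_gt_atTop 0] with ρ hρ
  rw [Real.rpow_sub_one (ne_of_gt hρ), sub_div, inv_eq_one_div]

private lemma log_th_tendsto {r : ℝ} (hr : 0 < r) (hr2 : r < 1/2) :
    Tendsto (fun ρ : ℝ => Real.log ((ρ ^ (2*r) - 1) / ρ) / Real.log ρ) atTop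
      (nhds (2*r - 1)) := by
  have key : Tendsto (fun ρ : ℝ => 2*r - 1 + Real.log (1 - ρ ^ (-(2*r))) / Real.log ρ)
      atTop (nhds (2*r-1)) := by
    have h0 : Tendsto (fun ρ:ℝ => 1 - ρ ^ (-(2*r))) atTop (nhds 1) := by
      simpa using tendsto_const_nhds.sub (tendsto_rpow_neg_atTop (y := 2*r) (by linarith))
    have h1 : Tendsto (fun ρ : ℝ => Real.log (1 - ρ ^ (-(2*r)))) atTop (nhds 0) := by
      have := (Real.continuousAt_log one_ne_zero).tendsto.comp h0
      rw [Real.log_one] at this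
      exact this
    simpa using tendsto_const_nhds.add (h1.div_atTop Real.tendsto_log_atTop)
  refine key.congr' ?_
  filter_upwards [eventually_gt_atTop 1] with ρ hρ
  have hρ0 : (0:ℝ) < ρ := by linarith
  have hlog : 0 < Real.log ρ := Real.log_pos hρ
  have hfac : ρ ^ (2*r) * (1 - ρ ^ (-(2*r))) = ρ ^ (2*r) - 1 := by
    rw [mul_sub, mul_one, ← Real.rpow_add hρ0]
    simp
  have h1 : (1:ℝ) < ρ ^ (2*r) :=
    (Real.one_lt_rpow_iff_of_pos hρ0).mpr (Or.inl ⟨hρ, by linarith⟩)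
  have hq : (0:ℝ) < 1 - ρ ^ (-(2*r)) := by
    have : ρ ^ (-(2*r)) < 1 := by
      rw [Real.rpow_neg hρ0.le]
      exact inv_lt_one_of_one_lt₀ h1
    linarith
  have hlogth : Real.log ((ρ ^ (2*r) - 1) / ρ)
      = 2*r * Real.log ρ + Real.log (1 - ρ ^ (-(2*r))) - Real.log ρ := by
    rw [Real.log_div (by linarith) (ne_of_gt hρ0), ← hfac,
      Real.log_mul (by positivity) (ne_of_gt hq), Real.log_rpow hρ0]
  rw [hlogth]
  field_simp
  ring

private lemma slope_lim : Tendsto (fun y : ℝ => (1 - Real.exp (-y)) / y)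
    (nhdsWithin 0 {0}ᶜ) (nhds 1) := by
  have hd : HasDerivAt (fun y : ℝ => 1 - Real.exp (-y)) 1 0 := by
    have h1 : HasDerivAt (fun y : ℝ => Real.exp (-y)) (-1) 0 := by
      have h3 := (Real.hasDerivAt_exp (-0:ℝ)).comp 0 (hasDerivAt_neg 0)
      rw [neg_zero, Real.exp_zero, one_mul] at h3
      exact h3
    have h2 := (hasDerivAt_const 0 (1:ℝ)).sub h1
    rw [sub_neg_eq_add, zero_add] at h2
    exact h2
  have := hasDerivAt_iff_tendsto_slope.mp hd
  refine this.congr' ?_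
  filter_upwards [self_mem_nhdsWithin] with y hy
  simp [slope, div_eq_mul_inv, mul_comm]

private lemma term_compl {lam r : ℝ} (hl : 0 < lam) (hr : 0 < r) (hr2 : r < 1/2) :
    Tendsto (fun ρ : ℝ => Real.log (1 - Real.exp (-lam * ((ρ ^ (2*r) - 1) / ρ))) / Real.log ρ)
      atTop (nhds (2*r - 1)) := by
  set th : ℝ → ℝ := fun ρ => (ρ ^ (2*r) - 1) / ρ with hth
  have hx : Tendsto (fun ρ => lam * th ρ) atTop (nhdsWithin 0 {0}ᶜ) := by
    rw [tendsto_nhdsWithin_iff]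
    constructor
    · simpa using (th_tendsto hr hr2).const_mul lam
    · filter_upwards [eventually_gt_atTop 1] with ρ hρ
      exact Set.mem_compl_singleton_iff.mpr (ne_of_gt (mul_pos hl (th_pos hr hρ)))
  have hq : Tendsto (fun ρ => (1 - Real.exp (-(lam * th ρ))) / (lam * th ρ)) atTop (nhds 1) :=
    slope_lim.comp hx
  have hlq : Tendsto (fun ρ => Real.log ((1 - Real.exp (-(lam * th ρ))) / (lam * th ρ))) atTop
      (nhds 0) := by
    have := (Real.continuousAt_log one_ne_zero).tendsto.comp hq
    rw [Real.log_one] at this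
    exact this
  have key : Tendsto (fun ρ : ℝ => Real.log lam / Real.log ρ + Real.log (th ρ) / Real.log ρ
      + Real.log ((1 - Real.exp (-(lam * th ρ))) / (lam * th ρ)) / Real.log ρ) atTop
      (nhds (2*r - 1)) := by
    have a1 := (tendsto_const_nhds (x := Real.log lam)).div_atTop Real.tendsto_log_atTop
    have a3 := hlq.div_atTop Real.tendsto_log_atTop
    simpa using (a1.add (log_th_tendsto hr hr2)).add a3
  refine key.congr' ?_
  filter_upwards [eventually_gt_atTop 1] with ρ hρ
  have hthp : 0 < th ρ := th_pos hr hρ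
  have hlx : 0 < lam * th ρ := mul_pos hl hthp
  have h1e : 0 < 1 - Real.exp (-(lam * th ρ)) := by
    have : Real.exp (-(lam * th ρ)) < 1 := Real.exp_lt_one_iff.mpr (by linarith)
    linarith
  have hsplit : Real.log (1 - Real.exp (-lam * th ρ))
      = Real.log lam + Real.log (th ρ)
        + Real.log ((1 - Real.exp (-(lam * th ρ))) / (lam * th ρ)) := by
    rw [Real.log_div (ne_of_gt h1e) (ne_of_gt hlx), Real.log_mul (ne_of_gt hl) (ne_of_gt hthp),
      neg_mul]
    ring
  rw [hsplit]
  ring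

private lemma term_mem {lam r : ℝ} (hl : 0 < lam) (hr : 0 < r) (hr2 : r < 1/2) :
    Tendsto (fun ρ : ℝ => Real.log (Real.exp (-lam * ((ρ ^ (2*r) - 1) / ρ))) / Real.log ρ)
      atTop (nhds 0) := by
  have h0 : Tendsto (fun ρ : ℝ => -lam * ((ρ ^ (2*r) - 1) / ρ)) atTop (nhds 0) := by
    simpa using (th_tendsto hr hr2).const_mul (-lam)
  have := h0.div_atTop Real.tendsto_log_atTop
  refine this.congr ?_
  intro ρ; rw [Real.log_exp]

/-- For rates `λᵢ > 0`, `0 < r < 1/2`, threshold `th(ρ) = (ρ^{2r} - 1)/ρ`, and a fixed subset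
`Γ` of size `t`, the probability `p_Γ(ρ) = ∏_{i∈Γ} e^{-λᵢ th(ρ)} ∏_{i∉Γ} (1 - e^{-λᵢ th(ρ)})`
satisfies `lim_{ρ→∞} log p_Γ(ρ) / log ρ = (2r-1)(N-t)`. -/
theorem stmt_3 (N : ℕ) (lam : Fin N → ℝ) (hlam : ∀ i, 0 < lam i)
    (r : ℝ) (hr : 0 < r) (hr2 : r < 1 / 2)
    (Γ : Finset (Fin N)) (t : ℕ) (hΓ : Γ.card = t) :
    Tendsto (fun ρ : ℝ =>
        Real.log
          ((∏ i ∈ Γ, Real.exp (-lam i * ((ρ ^ (2 * r) - 1) / ρ))) *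
            ∏ i ∈ Γᶜ, (1 - Real.exp (-lam i * ((ρ ^ (2 * r) - 1) / ρ)))) / Real.log ρ)
      atTop (nhds ((2 * r - 1) * (N - t))) := by
  have htN : t ≤ N := by
    rw [← hΓ]
    simpa using Γ.card_le_univ
  have hcard : (Γᶜ.card : ℝ) = (N : ℝ) - t := by
    rw [Finset.card_compl, hΓ, Fintype.card_fin, Nat.cast_sub htN]
  have h1 : Tendsto (fun ρ : ℝ =>
      ∑ i ∈ Γ, Real.log (Real.exp (-lam i * ((ρ ^ (2*r) - 1) / ρ))) / Real.log ρ
      + ∑ i ∈ Γᶜ, Real.log (1 - Real.exp (-lam i * ((ρ ^ (2*r) - 1) / ρ))) / Real.log ρ)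
      atTop (nhds ((2 * r - 1) * (N - t))) := by
    have hA : Tendsto (fun ρ : ℝ =>
        ∑ i ∈ Γ, Real.log (Real.exp (-lam i * ((ρ ^ (2*r) - 1) / ρ))) / Real.log ρ)
        atTop (nhds 0) := by
      have := tendsto_finset_sum Γ (fun i _ => term_mem (hlam i) hr hr2)
      simpa using this
    have hB : Tendsto (fun ρ : ℝ =>
        ∑ i ∈ Γᶜ, Real.log (1 - Real.exp (-lam i * ((ρ ^ (2*r) - 1) / ρ))) / Real.log ρ)
        atTop (nhds ((2 * r - 1) * (N - t))) := by
      have := tendsto_finset_sum Γᶜ (fun i _ => term_compl (hlam i) hr hr2)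
      have hsum : ∑ _i ∈ Γᶜ, (2*r - 1) = (2 * r - 1) * ((N : ℝ) - t) := by
        rw [Finset.sum_const, ← hcard, nsmul_eq_mul, mul_comm]
      rw [hsum] at this
      exact this
    simpa using hA.add hB
  refine h1.congr' ?_
  filter_upwards [eventually_gt_atTop 1] with ρ hρ
  have hth : 0 < (ρ ^ (2*r) - 1) / ρ := th_pos hr hρ
  have hne1 : ∀ i ∈ Γ, Real.exp (-lam i * ((ρ ^ (2*r) - 1) / ρ)) ≠ 0 :=
    fun i _ => (Real.exp_pos _).ne'
  have hpos2 : ∀ i ∈ Γᶜ, 0 < 1 - Real.exp (-lam i * ((ρ ^ (2*r) - 1) / ρ)) := by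
    intro i _
    have : Real.exp (-lam i * ((ρ ^ (2*r) - 1) / ρ)) < 1 := by
      rw [Real.exp_lt_one_iff]
      have := mul_pos (hlam i) hth
      nlinarith
    linarith
  have hne2 : ∀ i ∈ Γᶜ, 1 - Real.exp (-lam i * ((ρ ^ (2*r) - 1) / ρ)) ≠ 0 :=
    fun i hi => (hpos2 i hi).ne'
  rw [Real.log_mul (Finset.prod_ne_zero_iff.mpr hne1) (Finset.prod_ne_zero_iff.mpr hne2),
    Real.log_prod hne1, Real.log_prod hne2, add_div, Finset.sum_div, Finset.sum_div]
end
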